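/- Let Y be a type, X ⊆ Y a subset, and n, m ∈ ℕ. Let e : Fin n ⊕ Fin m ≃ Fin (n+m) be the canonical equivalence, and define Φ : Perm (Fin (n+m)) × (Fin n → (Y \ X)) × (Fin m → X) → (Fin (n+m) → Y) by Φ(σ, g, h) = (Sum.elim (fun a ↦ ↑(g a)) (fun b ↦ ↑(h b))) ∘ e⁻¹ ∘ σ⁻¹. Then: (a) the range of Φ is exactly {f : Fin (n+m) → Y | the set {i | f i ∉ X} has exactly n elements}; and (b) Φ(σ, g, h) = Φ(σ', g', h') if and only if there exist ρ₁ ∈ Perm (Fin n) and ρ₂ ∈ Perm (Fin m) with g' = g ∘ ρ₁, h' = h ∘ ρ₂, and σ' = σ ∘ (e ∘ (Equiv.sumCongr ρ₁ ρ₂) ∘ e⁻¹). In other words, Φ descends to a bijection from the quotient of Perm (Fin (n+m)) × (Fin n → (Y \ X)) × (Fin m → X) by the evident right Σ_n × Σ_m-action onto the stratum F^{n+m}_n \ F^{n+m}_{n-1}. (This is the set-level content of the pushout square Σ_{n+m} ×_{Σ_n × Σ_m} (Y^n × X^m, F^n_{n-1} × X^m) → (F^{n+m}_n, F^{n+m}_{n-1})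 in the paper's Lemma computing the filtration quotients.) -/

import Mathlib

/-- The map `Φ : Σ_{n+m} × (Y \ X)^n × X^m → Y^{n+m}`,
`Φ (σ, g, h) = (Sum.elim g h) ∘ finSumFinEquiv⁻¹ ∘ σ⁻¹`. -/
def Phi (Y : Type*) (X : Set Y) (n m : ℕ)
    (t : Equiv.Perm (Fin (n + m)) × (Fin n → (Xᶜ : Set Y)) × (Fin m → X)) :
    Fin (n + m) → Y :=
  (Sum.elim (fun a => (t.2.1 a : Y)) fun b => (t.2.2 b : Y)) ∘
    ⇑finSumFinEquiv.symm ∘ ⇑(t.1⁻¹)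

theorem Equiv.Perm.apply_inv_self {α : Type*} (f : Equiv.Perm α) (x : α) : f (f⁻¹ x) = x :=
  f.apply_symm_apply x

@[simp]
theorem Equiv.Perm.inv_apply_self {α : Type*} (f : Equiv.Perm α) (x : α) : f⁻¹ (f x) = x :=
  f.symm_apply_apply x

lemma Phi_apply (Y : Type*) (X : Set Y) (n m : ℕ)
    (σ : Equiv.Perm (Fin (n + m))) (g : Fin n → (Xᶜ : Set Y)) (h : Fin m → X)
    (i : Fin (n + m)) :
    Phi Y X n m (σ, g, h) i =
      Sum.elim (fun a => (g a : Y)) (fun b => (h b : Y)) (finSumFinEquiv.symm (σ⁻¹ i)) := rfl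

lemma range_part (Y : Type*) (X : Set Y) (n m : ℕ) :
    Set.range (Phi Y X n m) = {f : Fin (n + m) → Y | {i | f i ∉ X}.ncard = n} := by
  classical
  ext f
  simp only [Set.mem_range, Set.mem_setOf_eq]
  constructor
  · rintro ⟨⟨σ, g, h⟩, rfl⟩
    have hset : {i | Phi Y X n m (σ, g, h) i ∉ X} =
        Set.range (fun a : Fin n => σ (finSumFinEquiv (Sum.inl a))) := by
      ext i
      simp only [Set.mem_setOf_eq, Set.mem_range, Phi_apply]
      constructor
      · intro hi
        rcases hs : finSumFinEquiv.symm (σ⁻¹ i) with a | b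
        · refine ⟨a, ?_⟩
          have : finSumFinEquiv (Sum.inl a) = σ⁻¹ i := by
            rw [← hs, Equiv.apply_symm_apply]
          rw [this, Equiv.Perm.apply_inv_self]
        · exfalso
          rw [hs] at hi
          exact hi (h b).2
      · rintro ⟨a, rfl⟩
        simp only [Equiv.Perm.inv_apply_self, Equiv.symm_apply_apply, Sum.elim_inl]
        exact (g a).2
    rw [hset, ← Nat.card_coe_set_eq, Nat.card_range_of_injective, Nat.card_eq_fintype_card,
      Fintype.card_fin]
    intro a b hab
    simpa using σ.injective hab
  · intro hf
    set p : Fin (n + m) → Prop := fun i => f i ∉ X with hp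
    have hc1 : Fintype.card {i // p i} = n := by
      rw [← Nat.card_eq_fintype_card]
      exact (Nat.card_coe_set_eq {i | f i ∉ X}).trans hf
    have hc2 : Fintype.card {i // ¬ p i} = m := by
      rw [Fintype.card_subtype_compl, hc1, Fintype.card_fin]
      omega
    let e1 : Fin n ≃ {i // p i} := (Fintype.equivFinOfCardEq hc1).symm
    let e2 : Fin m ≃ {i // ¬ p i} := (Fintype.equivFinOfCardEq hc2).symm
    let σ : Equiv.Perm (Fin (n + m)) :=
      finSumFinEquiv.symm.trans ((e1.sumCongr e2).trans (Equiv.sumCompl p))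
    let g : Fin n → (Xᶜ : Set Y) := fun a => ⟨f (e1 a), (e1 a).2⟩
    let h : Fin m → X := fun b => ⟨f (e2 b), not_not.mp (e2 b).2⟩
    refine ⟨⟨σ, g, h⟩, ?_⟩
    funext i
    rw [Phi_apply]
    have hσinv : finSumFinEquiv.symm (σ⁻¹ i) = (e1.sumCongr e2).symm ((Equiv.sumCompl p).symm i) := by
      simp [σ, Equiv.Perm.inv_def]
    rw [hσinv]
    by_cases hi : p i
    · rw [Equiv.sumCompl_symm_apply_of_pos hi]
      simp [g]
    · rw [Equiv.sumCompl_symm_apply_of_neg hi]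
      simp [h]

theorem statement13 (Y : Type*) (X : Set Y) (n m : ℕ) :
    (Set.range (Phi Y X n m) = {f : Fin (n + m) → Y | {i | f i ∉ X}.ncard = n}) ∧
      ∀ (σ σ' : Equiv.Perm (Fin (n + m))) (g g' : Fin n → (Xᶜ : Set Y))
        (h h' : Fin m → X),
        Phi Y X n m (σ, g, h) = Phi Y X n m (σ', g', h') ↔
          ∃ (ρ₁ : Equiv.Perm (Fin n)) (ρ₂ : Equiv.Perm (Fin m)),
            g' = g ∘ ρ₁ ∧ h' = h ∘ ρ₂ ∧
              σ' = σ * (finSumFinEquiv.symm.trans ((ρ₁.sumCongr ρ₂).trans finSumFinEquiv) :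
                Equiv.Perm (Fin (n + m))) := by
  refine ⟨range_part Y X n m, fun σ σ' g g' h h' => ?_⟩
  constructor
  · intro heq
    set e : Fin n ⊕ Fin m ≃ Fin (n + m) := finSumFinEquiv with he
    let ρ : Fin n ⊕ Fin m ≃ Fin n ⊕ Fin m :=
      e.trans (((σ' : Equiv.Perm (Fin (n+m))).trans σ⁻¹).trans e.symm)
    have key : ∀ s, Sum.elim (fun a => (g a : Y)) (fun b => (h b : Y)) (ρ s) =
        Sum.elim (fun a => (g' a : Y)) (fun b => (h' b : Y)) s := by
      intro s
      have h1 := congrFun heq (σ' (e s))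
      rw [Phi_apply, Phi_apply, Equiv.Perm.inv_apply_self, Equiv.symm_apply_apply] at h1
      exact h1
    have hL : ∀ a, ∃ c, ρ (Sum.inl a) = Sum.inl c := by
      intro a
      rcases hs : ρ (Sum.inl a) with c | b
      · exact ⟨c, rfl⟩
      · exfalso
        have := key (Sum.inl a)
        rw [hs] at this
        simp only [Sum.elim_inr, Sum.elim_inl] at this
        exact (g' a).2 (this ▸ (h b).2)
    have hR : ∀ b, ∃ c, ρ (Sum.inr b) = Sum.inr c := by
      intro b
      rcases hs : ρ (Sum.inr b) with a | c
      · exfalso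
        have := key (Sum.inr b)
        rw [hs] at this
        simp only [Sum.elim_inl, Sum.elim_inr] at this
        exact (g a).2 (this ▸ (h' b).2)
      · exact ⟨c, rfl⟩
    choose f₁ hf₁ using hL
    choose f₂ hf₂ using hR
    have hinj₁ : Function.Injective f₁ := by
      intro a b hab
      have : ρ (Sum.inl a) = ρ (Sum.inl b) := by rw [hf₁ a, hf₁ b, hab]
      simpa using ρ.injective this
    have hinj₂ : Function.Injective f₂ := by
      intro a b hab
      have : ρ (Sum.inr a) = ρ (Sum.inr b) := by rw [hf₂ a, hf₂ b, hab]
      simpa using ρ.injective this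
    let ρ₁ : Equiv.Perm (Fin n) := Equiv.ofBijective f₁ (Finite.injective_iff_bijective.mp hinj₁)
    let ρ₂ : Equiv.Perm (Fin m) := Equiv.ofBijective f₂ (Finite.injective_iff_bijective.mp hinj₂)
    have hρ₁ : ∀ a, ρ₁ a = f₁ a := fun a => rfl
    have hρ₂ : ∀ b, ρ₂ b = f₂ b := fun b => rfl
    have hsc : ∀ s, (ρ₁.sumCongr ρ₂) s = ρ s := by
      rintro (a | b)
      · rw [Equiv.sumCongr_apply, Sum.map_inl, hρ₁, ← hf₁]
      · rw [Equiv.sumCongr_apply, Sum.map_inr, hρ₂, ← hf₂]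
    refine ⟨ρ₁, ρ₂, ?_, ?_, ?_⟩
    · funext a
      have := key (Sum.inl a)
      rw [hf₁ a] at this
      simp only [Sum.elim_inl] at this
      exact Subtype.ext this.symm
    · funext b
      have := key (Sum.inr b)
      rw [hf₂ b] at this
      simp only [Sum.elim_inr] at this
      exact Subtype.ext this.symm
    · apply Equiv.ext
      intro x
      rw [Equiv.Perm.mul_apply]
      have h1 : ((finSumFinEquiv.symm.trans ((ρ₁.sumCongr ρ₂).trans finSumFinEquiv) :
          Equiv.Perm (Fin (n + m)))) x = e ((ρ₁.sumCongr ρ₂) (e.symm x)) := rfl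
      rw [h1, hsc]
      show σ' x = σ (e (e.symm (σ⁻¹ (σ' (e (e.symm x))))))
      rw [Equiv.apply_symm_apply, Equiv.apply_symm_apply, Equiv.Perm.apply_inv_self]
  · rintro ⟨ρ₁, ρ₂, rfl, rfl, rfl⟩
    funext i
    rw [Phi_apply, Phi_apply]
    rw [mul_inv_rev, Equiv.Perm.mul_apply]
    have : ((finSumFinEquiv.symm.trans ((ρ₁.sumCongr ρ₂).trans finSumFinEquiv) :
        Equiv.Perm (Fin (n + m)))⁻¹ : Equiv.Perm (Fin (n+m))) (σ⁻¹ i) =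
        finSumFinEquiv ((ρ₁.sumCongr ρ₂).symm (finSumFinEquiv.symm (σ⁻¹ i))) := by
      simp [Equiv.Perm.inv_def]
    rw [this, Equiv.symm_apply_apply]
    rcases finSumFinEquiv.symm (σ⁻¹ i) with a | b <;> simp
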